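/- For the cycle C_n (n ≥ 4) with a minimum fixing set D = {u,v} consisting of two non-antipodal vertices, the fixing share of each vertex of D is (1/2)·C(n,2); hence F_sum(C_n) = C(n,2) = n(n−1)/2 and F%(C_n) = 4/(n²−n). -/

import Mathlib

open scoped Classical

def fixesPair {V : Type*} (G : SimpleGraph V) (x u v : V) : Prop :=
  ∀ g : G ≃g G, g x = x → g u ≠ v ∧ g v ≠ u

def isFixingSet {V : Type*} (G : SimpleGraph V) (D : Set V) : Prop :=
  ∀ g : G ≃g G, (∀ v ∈ D, g v = v) → ∀ v : V, g v = v

/-- `D` is a minimum fixing set. -/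
def isMinFixingSet {n : ℕ} (G : SimpleGraph (Fin n)) (D : Finset (Fin n)) : Prop :=
  isFixingSet G ↑D ∧ ∀ E : Finset (Fin n), isFixingSet G ↑E → D.card ≤ E.card

/-- `V_s(G)`: unordered (encoded as increasing) pairs of distinct similar vertices. -/
noncomputable def VsG {n : ℕ} (G : SimpleGraph (Fin n)) : Finset (Fin n × Fin n) :=
  Finset.univ.filter (fun p => p.1 < p.2 ∧ ∃ g : G ≃g G, g p.1 = p.2)

/-- `F(x)`: the fixed neighborhood of `x`, the set of similar pairs fixed by `x`. -/
noncomputable def FxG {n : ℕ} (G : SimpleGraph (Fin n)) (x : Fin n) :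
    Finset (Fin n × Fin n) :=
  (VsG G).filter (fun p => fixesPair G x p.1 p.2)

/-- `𝓕(u,v) = {F(y) : y ∈ D, (u,v) ∈ F(y)}`. -/
noncomputable def calF {n : ℕ} (G : SimpleGraph (Fin n)) (D : Finset (Fin n))
    (p : Fin n × Fin n) : Finset (Finset (Fin n × Fin n)) :=
  (D.filter (fun y => p ∈ FxG G y)).image (FxG G)

/-- The fixing share `f(x;D) = Σ_{(u,v) ∈ F(x)} 1/|𝓕(u,v)|`. -/
noncomputable def fshare {n : ℕ} (G : SimpleGraph (Fin n)) (D : Finset (Fin n))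
    (x : Fin n) : ℚ :=
  ∑ p ∈ FxG G x, ((calF G D p).card : ℚ)⁻¹

/-- The fixing sum `F_sum(G) = Σ_{x ∈ D} f(x;D)`. -/
noncomputable def Fsum {n : ℕ} (G : SimpleGraph (Fin n)) (D : Finset (Fin n)) : ℚ :=
  ∑ x ∈ D, fshare G D x

/-- The fixing percentage `F%(G) = |D| / F_sum(G)`. -/
noncomputable def Fpct {n : ℕ} (G : SimpleGraph (Fin n)) (D : Finset (Fin n)) : ℚ :=
  (D.card : ℚ) / Fsum G D

open scoped Fin.CommRing

section Aux

open Finset SimpleGraph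

namespace Cyc

/-- Rotation by `t` as a graph automorphism of the cycle. -/
def rotIso (n : ℕ) [NeZero n] (t : Fin n) : cycleGraph n ≃g cycleGraph n where
  toEquiv := Equiv.addRight t
  map_rel_iff' := by
    intro a b
    simp [cycleGraph_adj', add_sub_add_right_eq_sub]

lemma rotIso_apply {n : ℕ} [NeZero n] (t y : Fin n) : rotIso n t y = y + t := rfl

/-- Reflection `y ↦ c - y` as a graph automorphism of the cycle. -/
def reflIso (n : ℕ) [NeZero n] (c : Fin n) : cycleGraph n ≃g cycleGraph n where
  toEquiv := Equiv.subLeft c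
  map_rel_iff' := by
    intro a b
    simp [cycleGraph_adj', sub_sub_sub_cancel_left, or_comm]

lemma reflIso_apply {n : ℕ} [NeZero n] (c y : Fin n) : reflIso n c y = c - y := rfl

variable {n : ℕ} [NeZero n]

lemma adj_iff (hn : 3 ≤ n) {a b : Fin n} :
    (cycleGraph n).Adj a b ↔ b = a + 1 ∨ b = a - 1 := by
  obtain ⟨m, rfl⟩ : ∃ m, n = m + 2 := ⟨n - 2, by omega⟩
  rw [cycleGraph_adj]
  constructor
  · rintro (h | h)
    · right; rw [← h]; ring
    · left; rw [← h]; ring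
  · rintro (rfl | rfl)
    · right; ring
    · left; ring

lemma two_ne_zero' (hn : 3 ≤ n) : (2 : Fin n) ≠ 0 := by
  intro h
  have := congrArg Fin.val h
  have h2 : (2 : Fin n).val = 2 % n := rfl
  rw [h2, Fin.val_zero, Nat.mod_eq_of_lt (by omega)] at this
  omega

lemma add_one_ne_sub_one (hn : 3 ≤ n) (a : Fin n) : a + 1 ≠ a - 1 := by
  intro h
  apply two_ne_zero' hn
  have : (a + 1) - (a - 1) = (2 : Fin n) := by ring
  rw [h, sub_self] at this
  exact this.symm

lemma key (hn : 3 ≤ n) (g : cycleGraph n ≃g cycleGraph n) (x : Fin n)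
    (h0 : g x = x) (h1 : g (x + 1) = x + 1) : ∀ y, g y = y := by
  have step : ∀ a : Fin n, g a = a → g (a - 1) = a - 1 → g (a + 1) = a + 1 := by
    intro a ha ha'
    have hadj : (cycleGraph n).Adj a (a + 1) := (adj_iff hn).2 (Or.inl rfl)
    have : (cycleGraph n).Adj (g a) (g (a + 1)) := g.map_rel_iff.2 hadj
    rw [ha, adj_iff hn] at this
    rcases this with h | h
    · exact h
    · exfalso
      rw [← ha'] at h
      exact add_one_ne_sub_one hn a (g.injective h)
  have H : ∀ k : ℕ, g (x + (k : Fin n)) = x + (k : Fin n) ∧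
      g (x + (k : Fin n) + 1) = x + (k : Fin n) + 1 := by
    intro k
    induction k with
    | zero => simpa using ⟨h0, h1⟩
    | succ k ih =>
      have hc : ((k + 1 : ℕ) : Fin n) = (k : Fin n) + 1 := by push_cast; ring
      rw [hc, ← add_assoc]
      refine ⟨ih.2, ?_⟩
      apply step
      · exact ih.2
      · have e : x + (k : Fin n) + 1 - 1 = x + (k : Fin n) := by ring
        rw [e]
        exact ih.1
  intro y
  have hy : x + (((y - x).val : ℕ) : Fin n) = y := by
    rw [Fin.cast_val_eq_self]
    ring
  rw [← hy]
  exact (H (y - x).val).1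

lemma dichotomy (hn : 3 ≤ n) (g : cycleGraph n ≃g cycleGraph n) (x : Fin n)
    (hx : g x = x) : (∀ y, g y = y) ∨ (∀ y, g y = x + x - y) := by
  have hadj : (cycleGraph n).Adj x (x + 1) := (adj_iff hn).2 (Or.inl rfl)
  have h1 : (cycleGraph n).Adj x (g (x + 1)) := by
    have := g.map_rel_iff.2 hadj; rwa [hx] at this
  rw [adj_iff hn] at h1
  rcases h1 with h1 | h1
  · exact Or.inl (key hn g x hx h1)
  · right
    have hkey := key hn (g.trans (reflIso n (x + x))) x ?_ ?_
    · intro y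
      have h2 := hkey y
      have h3 : (g.trans (reflIso n (x + x))) y = x + x - g y := rfl
      rw [h3] at h2
      have := congrArg (fun z => x + x - z) h2
      simpa using this
    · show reflIso n (x + x) (g x) = x
      rw [hx, reflIso_apply]; ring
    · show reflIso n (x + x) (g (x + 1)) = x + 1
      rw [h1, reflIso_apply]; ring

/-- The set of increasing pairs in `Fin n × Fin n`. -/
noncomputable def Spairs (n : ℕ) : Finset (Fin n × Fin n) :=
  Finset.univ.filter (fun p => p.1 < p.2)

/-- Increasing pairs with a given sum. -/
noncomputable def Apairs (n : ℕ) [NeZero n] (x : Fin n) : Finset (Fin n × Fin n) :=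
  Finset.univ.filter (fun p => p.1 < p.2 ∧ p.1 + p.2 = x + x)

lemma VsG_cycle : VsG (cycleGraph n) = Spairs n := by
  ext p
  simp only [VsG, Spairs, mem_filter, mem_univ, true_and, and_iff_left_iff_imp]
  intro _
  exact ⟨rotIso n (p.2 - p.1), by rw [rotIso_apply]; ring⟩

lemma FxG_cycle (hn : 3 ≤ n) (x : Fin n) :
    FxG (cycleGraph n) x
      = Finset.univ.filter (fun p : Fin n × Fin n => p.1 < p.2 ∧ p.1 + p.2 ≠ x + x) := by
  rw [FxG, VsG_cycle, Spairs, filter_filter]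
  ext p
  simp only [mem_filter, mem_univ, true_and]
  constructor
  · rintro ⟨hlt, hfix⟩
    refine ⟨hlt, ?_⟩
    intro hsum
    have hgx : reflIso n (x + x) x = x := by rw [reflIso_apply]; ring
    apply (hfix (reflIso n (x + x)) hgx).1
    rw [reflIso_apply, ← hsum]; ring
  · rintro ⟨hlt, hsum⟩
    refine ⟨hlt, ?_⟩
    intro g hgx
    rcases dichotomy hn g x hgx with h | h
    · exact ⟨by rw [h]; exact hlt.ne, by rw [h]; exact hlt.ne'⟩
    · constructor
      · rw [h]; intro he; apply hsum; rw [← he]; ring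
      · rw [h]; intro he; apply hsum; rw [← he]; ring

lemma half_card (hn : 3 ≤ n) (x : Fin n) :
    2 * (Apairs n x).card
      + (Finset.univ.filter (fun a : Fin n => a + a = x + x)).card = n := by
  classical
  have hAB : (Apairs n x).card
      = (Finset.univ.filter (fun a : Fin n => a < x + x - a)).card := by
    apply card_nbij' (fun p => p.1) (fun a => (a, x + x - a))
    · intro p hp
      simp only [mem_coe, Apairs, mem_filter, mem_univ, true_and] at hp ⊢
      have h2 : p.2 = x + x - p.1 := by rw [← hp.2]; ring
      rw [← h2]; exact hp.1
    · intro a ha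
      simp only [mem_coe, mem_filter, mem_univ, true_and] at ha
      simp only [mem_coe, Apairs, mem_filter, mem_univ, true_and]
      exact ⟨ha, by ring⟩
    · intro p hp
      simp only [mem_coe, Apairs, mem_filter, mem_univ, true_and] at hp
      have h2 : p.2 = x + x - p.1 := by rw [← hp.2]; ring
      exact Prod.ext rfl h2.symm
    · intro a _; rfl
  have hBC : (Finset.univ.filter (fun a : Fin n => a < x + x - a)).card
      = (Finset.univ.filter (fun a : Fin n => x + x - a < a)).card := by
    apply card_nbij' (fun a => x + x - a) (fun a => x + x - a)
    · intro a ha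
      simp only [mem_coe, mem_filter, mem_univ, true_and] at ha ⊢
      have h2 : x + x - (x + x - a) = a := by ring
      rw [h2]; exact ha
    · intro a ha
      simp only [mem_coe, mem_filter, mem_univ, true_and] at ha ⊢
      have h2 : x + x - (x + x - a) = a := by ring
      rw [h2]; exact ha
    · intro a _; ring
    · intro a _; ring
  have hsplit := card_filter_add_card_filter_not
    (s := (Finset.univ : Finset (Fin n))) (p := fun a => a < x + x - a)
  have hneg : (Finset.univ.filter (fun a : Fin n => ¬ a < x + x - a))
      = (Finset.univ.filter (fun a : Fin n => x + x - a < a))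
        ∪ (Finset.univ.filter (fun a : Fin n => a + a = x + x)) := by
    rw [← filter_or]
    apply filter_congr
    intro a _
    rw [not_lt, le_iff_lt_or_eq]
    constructor
    · rintro (h | h)
      · exact Or.inl h
      · right; nth_rewrite 1 [← h]; ring
    · rintro (h | h)
      · exact Or.inl h
      · right; rw [← h]; ring
  have hdisj : Disjoint (Finset.univ.filter (fun a : Fin n => x + x - a < a))
      (Finset.univ.filter (fun a : Fin n => a + a = x + x)) := by
    rw [Finset.disjoint_left]
    intro a ha hb
    simp only [mem_filter, mem_univ, true_and] at ha hb
    have : x + x - a = a := by rw [← hb]; ring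
    rw [this] at ha
    exact lt_irrefl _ ha
  rw [hneg, card_union_of_disjoint hdisj] at hsplit
  have huniv : (Finset.univ : Finset (Fin n)).card = n := by simp
  omega

lemma E_card_eq (x y : Fin n) :
    (Finset.univ.filter (fun a : Fin n => a + a = x + x)).card
      = (Finset.univ.filter (fun a : Fin n => a + a = y + y)).card := by
  apply card_nbij' (fun a => a + (y - x)) (fun a => a + (x - y))
  · intro a ha
    simp only [mem_coe, mem_filter, mem_univ, true_and] at ha ⊢
    have h2 : (a + (y - x)) + (a + (y - x)) = (a + a) + (y - x) + (y - x) := by ring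
    rw [h2, ha]; ring
  · intro a ha
    simp only [mem_coe, mem_filter, mem_univ, true_and] at ha ⊢
    have h2 : (a + (x - y)) + (a + (x - y)) = (a + a) + (x - y) + (x - y) := by ring
    rw [h2, ha]; ring
  · intro a _; ring
  · intro a _; ring

lemma E_card_le (hn : 3 ≤ n) (x : Fin n) :
    (Finset.univ.filter (fun a : Fin n => a + a = x + x)).card ≤ 2 := by
  have hhalf : n / 2 < n := by omega
  set w : Fin n := ⟨n / 2, hhalf⟩ with hw
  have hsub : (Finset.univ.filter (fun a : Fin n => a + a = x + x))
      ⊆ ({x, x + w} : Finset (Fin n)) := by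
    intro a ha
    simp only [mem_filter, mem_univ, true_and] at ha
    have hd : (a - x) + (a - x) = 0 := by
      have h2 : (a - x) + (a - x) = (a + a) - (x + x) := by ring
      rw [h2, ha, sub_self]
    have hval : ((a - x).val + (a - x).val) % n = 0 := by
      have := congrArg Fin.val hd
      rwa [Fin.add_def] at this
    have hlt : (a - x).val < n := (a - x).isLt
    have : (a - x).val = 0 ∨ 2 * (a - x).val = n := by
      obtain ⟨k, hk⟩ := Nat.dvd_of_mod_eq_zero hval
      have hk2 : k ≤ 1 := by
        by_contra hk2
        have : n * 2 ≤ n * k := Nat.mul_le_mul_left n (by omega)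
        omega
      interval_cases k <;> omega
    rcases this with h | h
    · have : a - x = 0 := Fin.ext (by simp [h])
      have : a = x := by
        have := sub_eq_zero.mp this
        exact this
      simp [this]
    · have hdw : a - x = w := by
        apply Fin.ext
        show (a - x).val = n / 2
        omega
      have : a = x + w := by rw [← hdw]; ring
      simp [this]
  calc (Finset.univ.filter (fun a : Fin n => a + a = x + x)).card
      ≤ ({x, x + w} : Finset (Fin n)).card := card_le_card hsub
    _ ≤ 2 := by
        apply le_trans (card_insert_le _ _)
        simp

lemma A_card_eq (hn : 3 ≤ n) (x y : Fin n) :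
    (Apairs n x).card = (Apairs n y).card := by
  have h1 := half_card hn x
  have h2 := half_card hn y
  have h3 := E_card_eq x y
  omega

lemma A_card_pos (hn : 4 ≤ n) (x : Fin n) : 1 ≤ (Apairs n x).card := by
  have h1 := half_card (by omega) x
  have h2 := E_card_le (by omega) x
  omega

lemma Spairs_card_eq : 2 * (Spairs n).card + n = n * n := by
  classical
  have hSS : (Spairs n).card
      = (Finset.univ.filter (fun p : Fin n × Fin n => p.2 < p.1)).card := by
    apply card_nbij' (fun p => (p.2, p.1)) (fun p => (p.2, p.1))
    · intro p hp
      simp only [mem_coe, Spairs, mem_filter, mem_univ, true_and] at hp ⊢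
      exact hp
    · intro p hp
      simp only [mem_coe, Spairs, mem_filter, mem_univ, true_and] at hp ⊢
      exact hp
    · intro p _; rfl
    · intro p _; rfl
  have hsplit := card_filter_add_card_filter_not
    (s := (Finset.univ : Finset (Fin n × Fin n))) (p := fun p => p.1 < p.2)
  have hneg : (Finset.univ.filter (fun p : Fin n × Fin n => ¬ p.1 < p.2))
      = (Finset.univ.filter (fun p : Fin n × Fin n => p.2 < p.1))
        ∪ (Finset.univ.filter (fun p : Fin n × Fin n => p.1 = p.2)) := by
    rw [← filter_or]
    apply filter_congr
    intro p _
    rw [not_lt, le_iff_lt_or_eq]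
    constructor
    · rintro (h | h)
      · exact Or.inl h
      · exact Or.inr h.symm
    · rintro (h | h)
      · exact Or.inl h
      · exact Or.inr h.symm
  have hdisj : Disjoint (Finset.univ.filter (fun p : Fin n × Fin n => p.2 < p.1))
      (Finset.univ.filter (fun p : Fin n × Fin n => p.1 = p.2)) := by
    rw [Finset.disjoint_left]
    intro p hp hq
    simp only [mem_filter, mem_univ, true_and] at hp hq
    rw [hq] at hp
    exact lt_irrefl _ hp
  have hdiag : (Finset.univ.filter (fun p : Fin n × Fin n => p.1 = p.2)).card = n := by
    have : (Finset.univ.filter (fun p : Fin n × Fin n => p.1 = p.2)).card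
        = (Finset.univ : Finset (Fin n)).card := by
      apply card_nbij' (fun p => p.1) (fun a => (a, a))
      · intro p _; exact mem_univ _
      · intro a _
        simp only [mem_coe, mem_filter, mem_univ, true_and]
      · intro p hp
        simp only [mem_coe, mem_filter, mem_univ, true_and] at hp
        exact Prod.ext rfl hp
      · intro a _; rfl
    rw [this]; simp
  have huniv : (Finset.univ : Finset (Fin n × Fin n)).card = n * n := by
    simp [card_univ]
  rw [hneg, card_union_of_disjoint hdisj, hdiag, huniv] at hsplit
  rw [Spairs] at hSS ⊢
  omega

lemma mem_FxG_iff (hn : 3 ≤ n) (x : Fin n) (p : Fin n × Fin n) :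
    p ∈ FxG (cycleGraph n) x ↔ p.1 < p.2 ∧ p.1 + p.2 ≠ x + x := by
  rw [FxG_cycle hn]; simp

lemma fshare_eq (hn : 4 ≤ n) (u v : Fin n) (hsum : u + u ≠ v + v) :
    fshare (cycleGraph n) {u, v} u = ((Spairs n).card : ℚ) / 2 := by
  classical
  have h3 : 3 ≤ n := by omega
  obtain ⟨q, hq⟩ := card_pos.mp (A_card_pos hn v)
  have hq' := hq
  simp only [Apairs, mem_filter, mem_univ, true_and] at hq'
  have hqu : q ∈ FxG (cycleGraph n) u :=
    (mem_FxG_iff h3 u q).2 ⟨hq'.1, by rw [hq'.2]; exact fun h => hsum h.symm⟩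
  have hqv : q ∉ FxG (cycleGraph n) v := by
    rw [mem_FxG_iff h3]
    rintro ⟨-, hne⟩
    exact hne hq'.2
  have hFne : FxG (cycleGraph n) u ≠ FxG (cycleGraph n) v := by
    intro h; rw [h] at hqu; exact hqv hqu
  have hcal : ∀ p ∈ FxG (cycleGraph n) u,
      ((calF (cycleGraph n) {u, v} p).card : ℚ)⁻¹
        = if p ∈ FxG (cycleGraph n) v then (2 : ℚ)⁻¹ else 1 := by
    intro p hp
    by_cases hpv : p ∈ FxG (cycleGraph n) v
    · have hfil : ({u, v} : Finset (Fin n)).filter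
          (fun y => p ∈ FxG (cycleGraph n) y) = {u, v} := by
        apply filter_true_of_mem
        intro y hy
        rcases mem_insert.mp hy with rfl | hy'
        · exact hp
        · rw [mem_singleton.mp hy']; exact hpv
      rw [if_pos hpv, calF, hfil, image_insert, image_singleton, card_pair hFne]
      norm_num
    · rw [if_neg hpv, calF]
      have hfil : ({u, v} : Finset (Fin n)).filter
          (fun y => p ∈ FxG (cycleGraph n) y) = {u} := by
        ext y
        simp only [mem_filter, mem_insert, mem_singleton]
        constructor
        · rintro ⟨rfl | rfl, hmem⟩
          · rfl
          · exact absurd hmem hpv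
        · rintro rfl; exact ⟨Or.inl rfl, hp⟩
      rw [hfil, image_singleton, card_singleton]
      norm_num
  rw [fshare, Finset.sum_congr rfl hcal, Finset.sum_ite, Finset.sum_const, Finset.sum_const]
  -- cardinalities
  have hSA : (Spairs n).filter (fun p => p.1 + p.2 = u + u) = Apairs n u := by
    ext p
    simp [Spairs, Apairs, mem_filter, and_assoc]
  have hSF : (Spairs n).filter (fun p => ¬ p.1 + p.2 = u + u) = FxG (cycleGraph n) u := by
    ext p
    simp [Spairs, FxG_cycle h3, mem_filter, and_assoc]
  have h1 : (Apairs n u).card + (FxG (cycleGraph n) u).card = (Spairs n).card := by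
    rw [← hSA, ← hSF]
    exact card_filter_add_card_filter_not (s := Spairs n)
      (fun p : Fin n × Fin n => p.1 + p.2 = u + u)
  have hID : ((FxG (cycleGraph n) u).filter (fun p => p ∈ FxG (cycleGraph n) v)).card
      + ((FxG (cycleGraph n) u).filter (fun p => ¬ p ∈ FxG (cycleGraph n) v)).card
      = (FxG (cycleGraph n) u).card :=
    card_filter_add_card_filter_not (s := FxG (cycleGraph n) u)
      (fun p : Fin n × Fin n => p ∈ FxG (cycleGraph n) v)
  have hD : (FxG (cycleGraph n) u).filter (fun p => ¬ p ∈ FxG (cycleGraph n) v)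
      = Apairs n v := by
    ext p
    simp only [mem_filter, mem_FxG_iff h3, Apairs, mem_univ, true_and, not_and, not_not]
    constructor
    · rintro ⟨⟨hlt, hneu⟩, himp⟩
      exact ⟨hlt, himp hlt⟩
    · rintro ⟨hlt, heq⟩
      exact ⟨⟨hlt, by rw [heq]; exact fun h => hsum h.symm⟩, fun _ => heq⟩
  have hab : (Apairs n u).card = (Apairs n v).card := A_card_eq h3 u v
  rw [hD] at hID
  rw [hD]
  rw [nsmul_eq_mul, nsmul_eq_mul, mul_one]
  have c1 : (((FxG (cycleGraph n) u).filter
      (fun p => p ∈ FxG (cycleGraph n) v)).card : ℚ)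
      + ((Apairs n v).card : ℚ) = ((FxG (cycleGraph n) u).card : ℚ) := by
    exact_mod_cast hID
  have c2 : ((Apairs n u).card : ℚ) + ((FxG (cycleGraph n) u).card : ℚ)
      = ((Spairs n).card : ℚ) := by exact_mod_cast h1
  have c4 : ((Apairs n u).card : ℚ) = ((Apairs n v).card : ℚ) := by exact_mod_cast hab
  linarith

end Cyc

end Aux

theorem stmt16 {n : ℕ} (hn : 4 ≤ n) (u v : Fin n) (huv : u ≠ v)
    (hna : (SimpleGraph.cycleGraph n).dist u v ≠ n / 2)
    (hD : isMinFixingSet (SimpleGraph.cycleGraph n) {u, v}) :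
    (∀ x ∈ ({u, v} : Finset (Fin n)),
        fshare (SimpleGraph.cycleGraph n) {u, v} x = (n.choose 2 : ℚ) / 2) ∧
      Fsum (SimpleGraph.cycleGraph n) {u, v} = (n.choose 2 : ℚ) ∧
      Fpct (SimpleGraph.cycleGraph n) {u, v} = 4 / ((n : ℚ) ^ 2 - n) := by
  haveI : NeZero n := ⟨by omega⟩
  have h3 : 3 ≤ n := by omega
  -- non-antipodality in algebraic form, from the fixing-set property
  have hsum : u + u ≠ v + v := by
    intro h
    have hfix := hD.1 (Cyc.reflIso n (u + u)) ?_ (u + 1)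
    · rw [Cyc.reflIso_apply] at hfix
      apply Cyc.add_one_ne_sub_one h3 u
      rw [← hfix]; ring
    · intro w hw
      have hw' : w = u ∨ w = v := by simpa using hw
      rcases hw' with rfl | rfl
      · rw [Cyc.reflIso_apply]; ring
      · rw [Cyc.reflIso_apply, h]; ring
  -- the cast of the Spairs cardinality
  have hS2 := Cyc.Spairs_card_eq (n := n)
  have hS : ((Cyc.Spairs n).card : ℚ) = (n.choose 2 : ℚ) := by
    have hc := congrArg (fun k : ℕ => (k : ℚ)) hS2
    push_cast at hc
    rw [Nat.cast_choose_two]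
    linarith
  have hf1 : fshare (SimpleGraph.cycleGraph n) {u, v} u
      = ((Cyc.Spairs n).card : ℚ) / 2 := Cyc.fshare_eq hn u v hsum
  have hf2 : fshare (SimpleGraph.cycleGraph n) {u, v} v
      = ((Cyc.Spairs n).card : ℚ) / 2 := by
    rw [Finset.pair_comm u v]
    exact Cyc.fshare_eq hn v u (Ne.symm hsum)
  have hshare : ∀ x ∈ ({u, v} : Finset (Fin n)),
      fshare (SimpleGraph.cycleGraph n) {u, v} x = (n.choose 2 : ℚ) / 2 := by
    intro x hx
    rcases Finset.mem_insert.mp hx with rfl | hx'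
    · rw [hf1, hS]
    · rw [Finset.mem_singleton.mp hx', hf2, hS]
  refine ⟨hshare, ?_, ?_⟩
  · rw [Fsum, Finset.sum_pair huv, hf1, hf2, hS]; ring
  · rw [Fpct, Fsum, Finset.sum_pair huv, hf1, hf2, hS, Finset.card_pair huv]
    have hch : (n.choose 2 : ℚ) = (n : ℚ) * ((n : ℚ) - 1) / 2 := Nat.cast_choose_two (K := ℚ) n
    have hn4 : (4 : ℚ) ≤ (n : ℚ) := by exact_mod_cast hn
    rw [hch]
    rw [div_eq_div_iff (by nlinarith) (by nlinarith)]
    push_cast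
    ring
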